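/- arXiv:1409.4166 — 5 statements merged into one kernel-verified Lean document; each statement's English description precedes it below -/
import Mathlib

section
/- Let X, Y be complex vector spaces and S : X → Y, T : Y → X linear maps. Since S(im(T∘S)) ⊆ im(S∘T) and T(im(S∘T)) ⊆ im(T∘S), the maps S and T induce linear maps S̄ : X/im(T∘S) → Y/im(S∘T) and T̄ : Y/im(S∘T) → X/im(T∘S), which satisfy T̄∘S̄ = 0 and S̄∘T̄ = 0. If (S, T) is a Fredholm pair, then (S̄, T̄) is also a Fredholm pair and ind(S̄, T̄) = ind(S, T). -/
open LinearMap Module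

/-- The quotient `ker S / (ker S ∩ im T)` appearing in the definition of a Fredholm pair. -/
abbrev fredholmKerQuot {X Y : Type*} [AddCommGroup X] [Module ℂ X]
    [AddCommGroup Y] [Module ℂ Y] (S : X →ₗ[ℂ] Y) (T : Y →ₗ[ℂ] X) :=
  (LinearMap.ker S) ⧸ (Submodule.comap (LinearMap.ker S).subtype (LinearMap.range T))

/-- `(S, T)` is a Fredholm pair if `ker S / (ker S ∩ im T)` and `ker T / (ker T ∩ im S)`
are both finite dimensional. -/
def IsFredholmPair {X Y : Type*} [AddCommGroup X] [Module ℂ X]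
    [AddCommGroup Y] [Module ℂ Y] (S : X →ₗ[ℂ] Y) (T : Y →ₗ[ℂ] X) : Prop :=
  FiniteDimensional ℂ (fredholmKerQuot S T) ∧ FiniteDimensional ℂ (fredholmKerQuot T S)

/-- The index of a Fredholm pair:
`ind(S,T) = dim (ker S / (ker S ∩ im T)) - dim (ker T / (ker T ∩ im S))`. -/
noncomputable def fredholmIndex {X Y : Type*} [AddCommGroup X] [Module ℂ X]
    [AddCommGroup Y] [Module ℂ Y] (S : X →ₗ[ℂ] Y) (T : Y →ₗ[ℂ] X) : ℤ :=
  (Module.finrank ℂ (fredholmKerQuot S T) : ℤ) - (Module.finrank ℂ (fredholmKerQuot T S) : ℤ)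

lemma fredholmKerQuot_equiv_aux {X Y : Type*} [AddCommGroup X] [Module ℂ X]
    [AddCommGroup Y] [Module ℂ Y] (S : X →ₗ[ℂ] Y) (T : Y →ₗ[ℂ] X)
    (Sbar : (X ⧸ LinearMap.range (T ∘ₗ S)) →ₗ[ℂ] (Y ⧸ LinearMap.range (S ∘ₗ T)))
    (Tbar : (Y ⧸ LinearMap.range (S ∘ₗ T)) →ₗ[ℂ] (X ⧸ LinearMap.range (T ∘ₗ S)))
    (hSbar : ∀ x : X, Sbar (Submodule.Quotient.mk x) = Submodule.Quotient.mk (S x))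
    (hTbar : ∀ y : Y, Tbar (Submodule.Quotient.mk y) = Submodule.Quotient.mk (T y)) :
    Nonempty (fredholmKerQuot S T ≃ₗ[ℂ] fredholmKerQuot Sbar Tbar) := by
  have hmem : ∀ x : LinearMap.ker S,
      ((LinearMap.range (T ∘ₗ S)).mkQ ∘ₗ (LinearMap.ker S).subtype) x ∈ LinearMap.ker Sbar := by
    intro x
    show Sbar (Submodule.Quotient.mk x.1) = 0
    rw [hSbar]
    have : S x.1 = 0 := x.2
    rw [this]
    simp
  let incl : LinearMap.ker S →ₗ[ℂ] LinearMap.ker Sbar :=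
    LinearMap.codRestrict _ ((LinearMap.range (T ∘ₗ S)).mkQ ∘ₗ (LinearMap.ker S).subtype) hmem
  let φ : LinearMap.ker S →ₗ[ℂ] fredholmKerQuot Sbar Tbar :=
    (Submodule.comap (LinearMap.ker Sbar).subtype (LinearMap.range Tbar)).mkQ ∘ₗ incl
  have hker : LinearMap.ker φ
      = Submodule.comap (LinearMap.ker S).subtype (LinearMap.range T) := by
    ext x
    have h0 : φ x = Submodule.Quotient.mk (incl x) := rfl
    simp only [LinearMap.mem_ker, Submodule.mem_comap, Submodule.subtype_apply, h0,
      Submodule.Quotient.mk_eq_zero, Submodule.mem_comap, Submodule.subtype_apply]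
    have hinclx : (incl x : X ⧸ LinearMap.range (T ∘ₗ S)) = Submodule.Quotient.mk x.1 := rfl
    constructor
    · rintro ⟨q, hq⟩
      obtain ⟨y, rfl⟩ := Submodule.mkQ_surjective _ q
      rw [Submodule.mkQ_apply, hTbar, hinclx] at hq
      have h2 : x.1 - T y ∈ LinearMap.range (T ∘ₗ S) := by
        rw [← Submodule.Quotient.mk_eq_zero, Submodule.Quotient.mk_sub, hq, sub_self]
      obtain ⟨z, hz⟩ := h2
      refine ⟨S z + y, ?_⟩
      have hz' : T (S z) = x.1 - T y := hz
      rw [map_add, hz']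
      abel
    · rintro ⟨y, hy⟩
      refine ⟨Submodule.Quotient.mk y, ?_⟩
      rw [hTbar, hinclx]
      exact congrArg _ hy
  have hsurj : Function.Surjective φ := by
    intro q
    obtain ⟨k, rfl⟩ := Submodule.mkQ_surjective _ q
    obtain ⟨x, hx⟩ := Submodule.mkQ_surjective (LinearMap.range (T ∘ₗ S)) k.1
    have hSx : S x ∈ LinearMap.range (S ∘ₗ T) := by
      have hk := k.2
      rw [LinearMap.mem_ker, ← hx, Submodule.mkQ_apply, hSbar,
        Submodule.Quotient.mk_eq_zero] at hk
      exact hk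
    obtain ⟨y, hy⟩ := hSx
    have hy' : S (T y) = S x := hy
    have hx' : x - T y ∈ LinearMap.ker S := by
      rw [LinearMap.mem_ker, map_sub, hy', sub_self]
    refine ⟨⟨x - T y, hx'⟩, ?_⟩
    show Submodule.Quotient.mk (incl ⟨x - T y, hx'⟩) = Submodule.Quotient.mk k
    rw [Submodule.Quotient.eq]
    simp only [Submodule.mem_comap, Submodule.subtype_apply]
    have h2 : ((incl ⟨x - T y, hx'⟩ - k : LinearMap.ker Sbar) : X ⧸ LinearMap.range (T ∘ₗ S))
        = Submodule.Quotient.mk (x - T y) - (k : X ⧸ LinearMap.range (T ∘ₗ S)) := rfl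
    refine ⟨Submodule.Quotient.mk (-y), ?_⟩
    rw [h2, hTbar, ← hx, Submodule.mkQ_apply, Submodule.Quotient.mk_sub,
      map_neg, Submodule.Quotient.mk_neg]
    abel
  exact ⟨(Submodule.quotEquivOfEq _ _ hker.symm).trans
    (LinearMap.quotKerEquivOfSurjective φ hsurj)⟩

/-- `S` and `T` map `im(T∘S)` into `im(S∘T)` and `im(S∘T)` into `im(T∘S)`
respectively, the induced maps `S̄ : X/im(T∘S) → Y/im(S∘T)` and `T̄ : Y/im(S∘T) → X/im(T∘S)`
satisfy `T̄∘S̄ = 0` and `S̄∘T̄ = 0`, and if `(S,T)` is a Fredholm pair then so is `(S̄,T̄)`,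
with the same index. -/
theorem fredholmPair_quotient_by_image {X Y : Type*} [AddCommGroup X] [Module ℂ X]
    [AddCommGroup Y] [Module ℂ Y] (S : X →ₗ[ℂ] Y) (T : Y →ₗ[ℂ] X)
    (Sbar : (X ⧸ LinearMap.range (T ∘ₗ S)) →ₗ[ℂ] (Y ⧸ LinearMap.range (S ∘ₗ T)))
    (Tbar : (Y ⧸ LinearMap.range (S ∘ₗ T)) →ₗ[ℂ] (X ⧸ LinearMap.range (T ∘ₗ S)))
    (hSbar : ∀ x : X, Sbar (Submodule.Quotient.mk x) = Submodule.Quotient.mk (S x))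
    (hTbar : ∀ y : Y, Tbar (Submodule.Quotient.mk y) = Submodule.Quotient.mk (T y)) :
    (Submodule.map S (LinearMap.range (T ∘ₗ S)) ≤ LinearMap.range (S ∘ₗ T)) ∧
    (Submodule.map T (LinearMap.range (S ∘ₗ T)) ≤ LinearMap.range (T ∘ₗ S)) ∧
    Tbar ∘ₗ Sbar = 0 ∧ Sbar ∘ₗ Tbar = 0 ∧
    (IsFredholmPair S T →
      IsFredholmPair Sbar Tbar ∧ fredholmIndex Sbar Tbar = fredholmIndex S T) := by

  refine ⟨?_, ?_, ?_, ?_, ?_⟩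
  · rintro _ ⟨_, ⟨x, rfl⟩, rfl⟩
    exact ⟨S x, by simp⟩
  · rintro _ ⟨_, ⟨y, rfl⟩, rfl⟩
    exact ⟨T y, by simp⟩
  · ext x
    simp only [LinearMap.comp_apply, Submodule.mkQ_apply, LinearMap.zero_apply]
    rw [hSbar, hTbar, Submodule.Quotient.mk_eq_zero]
    exact ⟨x, rfl⟩
  · ext y
    simp only [LinearMap.comp_apply, Submodule.mkQ_apply, LinearMap.zero_apply]
    rw [hTbar, hSbar, Submodule.Quotient.mk_eq_zero]
    exact ⟨y, rfl⟩
  · rintro ⟨h1, h2⟩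
    obtain ⟨e1⟩ := fredholmKerQuot_equiv_aux S T Sbar Tbar hSbar hTbar
    obtain ⟨e2⟩ := fredholmKerQuot_equiv_aux T S Tbar Sbar hTbar hSbar
    refine ⟨⟨?_, ?_⟩, ?_⟩
    · exact Module.Finite.equiv e1
    · exact Module.Finite.equiv e2
    · unfold fredholmIndex
      rw [e1.finrank_eq, e2.finrank_eq]
end

section
/- Let X, Y be complex vector spaces and S : X → Y, T : Y → X linear maps such that (S, T) is a Fredholm pair. If in addition the quotient spaces X/im(T∘S) and Y/im(S∘T) are finite-dimensional, then ind(S, T) = dim(X/im(T∘S)) − dim(Y/im(S∘T)). -/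
open LinearMap Module

open LinearMap Module

section Aux

variable {X Y : Type*} [AddCommGroup X] [Module ℂ X] [AddCommGroup Y] [Module ℂ Y]

/-- `p / (p ∩ q) ≃ (p ⊔ q)/q`, realized as the image of `p ⊔ q` in `M ⧸ q`. -/
noncomputable def auxEquivA {M : Type*} [AddCommGroup M] [Module ℂ M] (p q : Submodule ℂ M) :
    (p ⧸ Submodule.comap p.subtype q) ≃ₗ[ℂ] ((p ⊔ q).map q.mkQ) :=
  have h1 : Submodule.comap p.subtype q = Submodule.comap p.subtype (p ⊓ q) := by
    rw [Submodule.comap_inf, Submodule.comap_subtype_self, top_inf_eq]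
  have h2 : Submodule.comap (p ⊔ q).subtype q =
      LinearMap.ker (q.mkQ ∘ₗ (p ⊔ q).subtype) := by
    rw [ker_comp, Submodule.ker_mkQ]
  have h3 : LinearMap.range (q.mkQ ∘ₗ (p ⊔ q).subtype) = (p ⊔ q).map q.mkQ := by
    rw [range_comp, Submodule.range_subtype]
  (Submodule.quotEquivOfEq _ _ h1).trans
    ((LinearMap.quotientInfEquivSupQuotient p q).trans
      ((Submodule.quotEquivOfEq _ _ h2).trans
        (((q.mkQ ∘ₗ (p ⊔ q).subtype).quotKerEquivRange).trans (LinearEquiv.ofEq _ _ h3))))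

lemma aux_comap (S : X →ₗ[ℂ] Y) (T : Y →ₗ[ℂ] X) :
    Submodule.comap T (LinearMap.range (T ∘ₗ S)) = LinearMap.ker T ⊔ LinearMap.range S := by
  ext y
  simp only [Submodule.mem_comap, LinearMap.mem_range, LinearMap.comp_apply, Submodule.mem_sup,
    LinearMap.mem_ker]
  constructor
  · rintro ⟨x, hx⟩
    exact ⟨y - S x, by simp [map_sub, ← hx], S x, ⟨x, rfl⟩, by abel⟩
  · rintro ⟨k, hk, s, ⟨x, rfl⟩, rfl⟩
    exact ⟨x, by simp [map_add, hk]⟩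

/-- The key one-sided lemma. -/
lemma aux_side (S : X →ₗ[ℂ] Y) (T : Y →ₗ[ℂ] X)
    (hk : FiniteDimensional ℂ (fredholmKerQuot T S))
    (hX : FiniteDimensional ℂ (X ⧸ LinearMap.range (T ∘ₗ S))) :
    FiniteDimensional ℂ (Y ⧸ LinearMap.range S) ∧
      finrank ℂ (X ⧸ LinearMap.range (T ∘ₗ S)) + finrank ℂ (fredholmKerQuot T S) =
        finrank ℂ (X ⧸ LinearMap.range T) + finrank ℂ (Y ⧸ LinearMap.range S) := by
  set p := LinearMap.range (T ∘ₗ S) with hp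
  have hle : p ≤ LinearMap.range T := by
    rintro _ ⟨x, rfl⟩; exact ⟨S x, rfl⟩
  -- the induced map Tbar : Y ⧸ range S → X ⧸ range (T∘S)
  have hpre : LinearMap.range S ≤ LinearMap.ker (p.mkQ ∘ₗ T) := by
    rintro _ ⟨x, rfl⟩
    simp [LinearMap.mem_ker, Submodule.Quotient.mk_eq_zero]
    exact ⟨x, rfl⟩
  set Tbar := (LinearMap.range S).liftQ (p.mkQ ∘ₗ T) hpre with hTbar
  have hker : LinearMap.ker Tbar =
      (LinearMap.ker T ⊔ LinearMap.range S).map (LinearMap.range S).mkQ := by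
    rw [hTbar, Submodule.ker_liftQ, ker_comp, Submodule.ker_mkQ, aux_comap S T]
  have hrange : LinearMap.range Tbar = (LinearMap.range T).map p.mkQ := by
    rw [hTbar, Submodule.range_liftQ, range_comp]
  -- ker Tbar ≃ fredholmKerQuot T S
  have ekq : fredholmKerQuot T S ≃ₗ[ℂ] LinearMap.ker Tbar := by
    rw [hker]
    exact auxEquivA (LinearMap.ker T) (LinearMap.range S)
  have hkerfd : FiniteDimensional ℂ (LinearMap.ker Tbar) := ekq.finiteDimensional
  have hrangefd : FiniteDimensional ℂ (LinearMap.range Tbar) := by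
    rw [hrange]; infer_instance
  -- Y ⧸ range S is finite dimensional
  have hYS : FiniteDimensional ℂ (Y ⧸ LinearMap.range S) := by
    have h1 : IsNoetherian ℂ (LinearMap.ker Tbar) := IsNoetherian.iff_fg.mpr hkerfd
    have h2 : IsNoetherian ℂ ((Y ⧸ LinearMap.range S) ⧸ LinearMap.ker Tbar) :=
      IsNoetherian.iff_fg.mpr (Tbar.quotKerEquivRange.symm.finiteDimensional)
    exact IsNoetherian.iff_fg.mp
      ((isNoetherian_iff_submodule_quotient (LinearMap.ker Tbar)).mpr ⟨h1, h2⟩)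
  refine ⟨hYS, ?_⟩
  -- rank-nullity for Tbar
  have rn : finrank ℂ (LinearMap.range Tbar) + finrank ℂ (LinearMap.ker Tbar) =
      finrank ℂ (Y ⧸ LinearMap.range S) := Tbar.finrank_range_add_finrank_ker
  -- quotient tower
  have tower : finrank ℂ ((X ⧸ p) ⧸ (LinearMap.range T).map p.mkQ)
      + finrank ℂ ((LinearMap.range T).map p.mkQ) = finrank ℂ (X ⧸ p) :=
    Submodule.finrank_quotient_add_finrank _
  have e2 : finrank ℂ ((X ⧸ p) ⧸ (LinearMap.range T).map p.mkQ) =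
      finrank ℂ (X ⧸ LinearMap.range T) :=
    (Submodule.quotientQuotientEquivQuotient p (LinearMap.range T) hle).finrank_eq
  have e3 : finrank ℂ (fredholmKerQuot T S) = finrank ℂ (LinearMap.ker Tbar) := ekq.finrank_eq
  have e4 : finrank ℂ (LinearMap.range Tbar) = finrank ℂ ((LinearMap.range T).map p.mkQ) := by
    rw [hrange]
  omega

end Aux

/-- if `(S,T)` is a Fredholm pair and the quotients `X/im(T∘S)` and
`Y/im(S∘T)` are finite dimensional, then
`ind(S,T) = dim (X/im(T∘S)) - dim (Y/im(S∘T))`. -/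
theorem fredholmIndex_eq_of_finiteDimensional_quotients {X Y : Type*}
    [AddCommGroup X] [Module ℂ X] [AddCommGroup Y] [Module ℂ Y]
    (S : X →ₗ[ℂ] Y) (T : Y →ₗ[ℂ] X) (hFred : IsFredholmPair S T)
    (hX : FiniteDimensional ℂ (X ⧸ LinearMap.range (T ∘ₗ S)))
    (hY : FiniteDimensional ℂ (Y ⧸ LinearMap.range (S ∘ₗ T))) :
    fredholmIndex S T =
      (Module.finrank ℂ (X ⧸ LinearMap.range (T ∘ₗ S)) : ℤ) -
        (Module.finrank ℂ (Y ⧸ LinearMap.range (S ∘ₗ T)) : ℤ) := by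
  obtain ⟨h1, h2⟩ := hFred
  obtain ⟨hYS, eq1⟩ := aux_side S T h2 hX
  obtain ⟨hXT, eq2⟩ := aux_side T S h1 hY
  unfold fredholmIndex
  omega
end

section
/- In the super setting, assume: (i) the pair (d⁺, d⁻) is a Fredholm pair; (ii) ker(F⁻∘F⁺) and ker(F⁺∘F⁻) are finite-dimensional; (iii) V⁰ = ker(F⁻∘F⁺) ⊕ im(F⁻∘F⁺) and V¹ = ker(F⁺∘F⁻) ⊕ im(F⁺∘F⁻). Then (F⁺, F⁻) is a Fredholm pair and ind(F⁺, F⁻) = ind(d⁺, d⁻). -/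
open LinearMap Module

lemma key_lemma {X Y : Type*} [AddCommGroup X] [Module ℂ X] [AddCommGroup Y] [Module ℂ Y]
    (S : X →ₗ[ℂ] Y) (T : Y →ₗ[ℂ] X) (P : X →ₗ[ℂ] X) (Q : Y →ₗ[ℂ] Y)
    (hP : FiniteDimensional ℂ (ker P)) (hQ : FiniteDimensional ℂ (ker Q))
    (hTQ : ∀ y, Q y = 0 → S (T y) = 0 ∧ P (T y) = 0)
    (hKey : ∀ y, S (T y) = 0 → P (T y) = 0 → ∃ z, Q z = 0 ∧ T y = T z)
    (hsurj : ∀ x, S x = 0 → ∃ y, S (x - T y) = 0 ∧ P (x - T y) = 0) :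
    FiniteDimensional ℂ (fredholmKerQuot S T) ∧
    (finrank ℂ (fredholmKerQuot S T) : ℤ) =
      (finrank ℂ (ker S ⊓ ker P : Submodule ℂ X) : ℤ)
      + (finrank ℂ (ker T ⊓ ker Q : Submodule ℂ Y) : ℤ) - (finrank ℂ (ker Q) : ℤ) := by
  set K₀ : Submodule ℂ X := ker S ⊓ ker P with hK₀
  haveI finK₀ : FiniteDimensional ℂ K₀ := by
    haveI := hP
    haveI : FiniteDimensional ℂ (Submodule.comap (ker P).subtype K₀) := inferInstance
    exact (Submodule.comapSubtypeEquivOfLe (inf_le_right : K₀ ≤ ker P)).finiteDimensional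
  set N : Submodule ℂ (ker S) := Submodule.comap (ker S).subtype (range T) with hN
  set φ : K₀ →ₗ[ℂ] fredholmKerQuot S T :=
    N.mkQ ∘ₗ Submodule.inclusion (inf_le_left : K₀ ≤ ker S) with hφ
  have hφapply : ∀ k : K₀, φ k = Submodule.Quotient.mk ⟨(k : X), k.2.1⟩ := by
    intro k; rfl
  have hφs : Function.Surjective φ := by
    intro q
    obtain ⟨x, rfl⟩ := Submodule.Quotient.mk_surjective N q
    obtain ⟨y, h1, h2⟩ := hsurj x x.2
    refine ⟨⟨(x : X) - T y, h1, h2⟩, ?_⟩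
    rw [hφapply]
    rw [Submodule.Quotient.eq]
    refine ⟨-y, ?_⟩
    simp
  have hkerφ : ker φ = Submodule.comap K₀.subtype (range T) := by
    ext k
    rw [mem_ker, hφapply, Submodule.Quotient.mk_eq_zero]
    simp [hN]
  haveI : FiniteDimensional ℂ (K₀ ⧸ ker φ) := inferInstance
  let e : (K₀ ⧸ ker φ) ≃ₗ[ℂ] fredholmKerQuot S T := φ.quotKerEquivOfSurjective hφs
  haveI finQ : FiniteDimensional ℂ (fredholmKerQuot S T) := e.finiteDimensional
  refine ⟨finQ, ?_⟩
  have h1 : finrank ℂ (fredholmKerQuot S T) = finrank ℂ (K₀ ⧸ ker φ) := e.symm.finrank_eq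
  have h2 : finrank ℂ (K₀ ⧸ ker φ) + finrank ℂ (ker φ) = finrank ℂ K₀ :=
    Submodule.finrank_quotient_add_finrank (ker φ)
  have h3 : finrank ℂ (ker φ) = finrank ℂ (K₀ ⊓ range T : Submodule ℂ X) := by
    rw [hkerφ]
    rw [← Submodule.map_comap_subtype K₀ (range T)]
    exact (Submodule.equivMapOfInjective K₀.subtype (Submodule.injective_subtype K₀)
      (Submodule.comap K₀.subtype (range T))).finrank_eq
  have h4 : (K₀ ⊓ range T : Submodule ℂ X) = range (T ∘ₗ (ker Q).subtype) := by
    ext x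
    simp only [Submodule.mem_inf, mem_ker, mem_range, hK₀, LinearMap.coe_comp,
      Function.comp_apply, Submodule.coe_subtype]
    constructor
    · rintro ⟨⟨hxS, hxP⟩, ⟨y, rfl⟩⟩
      obtain ⟨z, hz, hzz⟩ := hKey y hxS hxP
      exact ⟨⟨z, hz⟩, hzz.symm⟩
    · rintro ⟨⟨z, hz⟩, rfl⟩
      obtain ⟨u1, u2⟩ := hTQ z hz
      exact ⟨⟨u1, u2⟩, ⟨z, rfl⟩⟩
  have h5 : finrank ℂ (range (T ∘ₗ (ker Q).subtype)) + finrank ℂ (ker (T ∘ₗ (ker Q).subtype))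
      = finrank ℂ (ker Q) := by
    haveI := hQ
    exact (T ∘ₗ (ker Q).subtype).finrank_range_add_finrank_ker
  have h6 : finrank ℂ (ker (T ∘ₗ (ker Q).subtype)) = finrank ℂ (ker T ⊓ ker Q : Submodule ℂ Y) := by
    rw [LinearMap.ker_comp]
    rw [show (ker T ⊓ ker Q : Submodule ℂ Y) = ker Q ⊓ ker T from inf_comm _ _]
    rw [← Submodule.map_comap_subtype (ker Q) (ker T)]
    exact (Submodule.equivMapOfInjective (ker Q).subtype (Submodule.injective_subtype _)
      (Submodule.comap (ker Q).subtype (ker T))).finrank_eq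
  rw [h4] at h3
  rw [h1]
  omega

/-- in the super setting (`F⁺ = d⁺ + ∂⁺`, `F⁻ = d⁻ + ∂⁻`), if `(d⁺, d⁻)` is a
Fredholm pair, `ker(F⁻∘F⁺)` and `ker(F⁺∘F⁻)` are finite dimensional, and
`V⁰ = ker(F⁻∘F⁺) ⊕ im(F⁻∘F⁺)`, `V¹ = ker(F⁺∘F⁻) ⊕ im(F⁺∘F⁻)`, then `(F⁺, F⁻)` is a
Fredholm pair and `ind(F⁺,F⁻) = ind(d⁺,d⁻)`. -/
theorem fredholmIndex_super_eq_index_d {V₀ V₁ : Type*}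
    [AddCommGroup V₀] [Module ℂ V₀] [AddCommGroup V₁] [Module ℂ V₁]
    (dp δp : V₀ →ₗ[ℂ] V₁) (dm δm : V₁ →ₗ[ℂ] V₀)
    (hd₁ : dm ∘ₗ dp = 0) (hd₂ : dp ∘ₗ dm = 0)
    (hδ₁ : δm ∘ₗ δp = 0) (hδ₂ : δp ∘ₗ δm = 0)
    (hFredd : IsFredholmPair dp dm)
    (hker₀ : FiniteDimensional ℂ (LinearMap.ker ((dm + δm) ∘ₗ (dp + δp))))
    (hker₁ : FiniteDimensional ℂ (LinearMap.ker ((dp + δp) ∘ₗ (dm + δm))))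
    (hcompl₀ : IsCompl (LinearMap.ker ((dm + δm) ∘ₗ (dp + δp)))
      (LinearMap.range ((dm + δm) ∘ₗ (dp + δp))))
    (hcompl₁ : IsCompl (LinearMap.ker ((dp + δp) ∘ₗ (dm + δm)))
      (LinearMap.range ((dp + δp) ∘ₗ (dm + δm)))) :
    IsFredholmPair (dp + δp) (dm + δm) ∧
    fredholmIndex (dp + δp) (dm + δm) = fredholmIndex dp dm := by
  set Fp : V₀ →ₗ[ℂ] V₁ := dp + δp with hFp
  set Fm : V₁ →ₗ[ℂ] V₀ := dm + δm with hFm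
  set L₀ : V₀ →ₗ[ℂ] V₀ := Fm ∘ₗ Fp with hL₀
  set L₁ : V₁ →ₗ[ℂ] V₁ := Fp ∘ₗ Fm with hL₁
  -- pointwise versions of the complex identities
  have ed1 : ∀ x, dm (dp x) = 0 := fun x => by simpa using LinearMap.ext_iff.mp hd₁ x
  have ed2 : ∀ y, dp (dm y) = 0 := fun y => by simpa using LinearMap.ext_iff.mp hd₂ y
  have eδ1 : ∀ x, δm (δp x) = 0 := fun x => by simpa using LinearMap.ext_iff.mp hδ₁ x
  have eδ2 : ∀ y, δp (δm y) = 0 := fun y => by simpa using LinearMap.ext_iff.mp hδ₂ y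
  -- commutation of d with the Laplacians
  have cdp : ∀ x, dp (L₀ x) = L₁ (dp x) := by
    intro x
    simp only [hL₀, hL₁, hFp, hFm, LinearMap.comp_apply, LinearMap.add_apply, map_add,
      ed1, ed2, eδ1, eδ2, map_zero, add_zero, zero_add]
  have cdm : ∀ y, dm (L₁ y) = L₀ (dm y) := by
    intro y
    simp only [hL₀, hL₁, hFp, hFm, LinearMap.comp_apply, LinearMap.add_apply, map_add,
      ed1, ed2, eδ1, eδ2, map_zero, add_zero, zero_add]
  have cFp : ∀ x, Fp (L₀ x) = L₁ (Fp x) := fun x => rfl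
  have cFm : ∀ y, Fm (L₁ y) = L₀ (Fm y) := fun y => rfl
  -- expansions on kernels of d
  have expand₀ : ∀ z, dp z = 0 → L₀ z = dm (δp z) := by
    intro z hz
    rw [hL₀, LinearMap.comp_apply]
    rw [show Fp z = δp z from by rw [hFp, LinearMap.add_apply, hz, zero_add]]
    rw [hFm, LinearMap.add_apply, eδ1, add_zero]
  have expand₁ : ∀ z, dm z = 0 → L₁ z = dp (δm z) := by
    intro z hz
    rw [hL₁, LinearMap.comp_apply]
    rw [show Fm z = δm z from by rw [hFm, LinearMap.add_apply, hz, zero_add]]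
    rw [hFp, LinearMap.add_apply, eδ2, add_zero]
  -- decomposition and disjointness
  have dec₀ : ∀ v : V₀, ∃ a u, L₀ a = 0 ∧ v = a + L₀ u := by
    intro v
    have hv : v ∈ (ker L₀) ⊔ (range L₀) := by rw [hcompl₀.sup_eq_top]; trivial
    obtain ⟨a, ha, b, hb, hab⟩ := Submodule.mem_sup.mp hv
    obtain ⟨u, rfl⟩ := hb
    exact ⟨a, u, mem_ker.mp ha, hab.symm⟩
  have dec₁ : ∀ v : V₁, ∃ a u, L₁ a = 0 ∧ v = a + L₁ u := by
    intro v
    have hv : v ∈ (ker L₁) ⊔ (range L₁) := by rw [hcompl₁.sup_eq_top]; trivial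
    obtain ⟨a, ha, b, hb, hab⟩ := Submodule.mem_sup.mp hv
    obtain ⟨u, rfl⟩ := hb
    exact ⟨a, u, mem_ker.mp ha, hab.symm⟩
  have disj₀ : ∀ v : V₀, L₀ v = 0 → v ∈ range L₀ → v = 0 := by
    intro v h1 h2
    exact (Submodule.disjoint_def.mp hcompl₀.disjoint) v (mem_ker.mpr h1) h2
  have disj₁ : ∀ v : V₁, L₁ v = 0 → v ∈ range L₁ → v = 0 := by
    intro v h1 h2
    exact (Submodule.disjoint_def.mp hcompl₁.disjoint) v (mem_ker.mpr h1) h2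
  -- Application 1 : (Fp, Fm)
  have hTQ1 : ∀ y, L₁ y = 0 → Fp (Fm y) = 0 ∧ L₀ (Fm y) = 0 := by
    intro y hy
    have h1 : Fp (Fm y) = 0 := hy
    exact ⟨h1, by rw [← cFm y, hy, map_zero]⟩
  have hKey1 : ∀ y, Fp (Fm y) = 0 → L₀ (Fm y) = 0 → ∃ z, L₁ z = 0 ∧ Fm y = Fm z :=
    fun y h1 _ => ⟨y, h1, rfl⟩
  have hsurj1 : ∀ x, Fp x = 0 → ∃ y, Fp (x - Fm y) = 0 ∧ L₀ (x - Fm y) = 0 := by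
    intro x hx
    refine ⟨0, by simpa using hx, ?_⟩
    have : L₀ (x - Fm 0) = Fm (Fp (x - Fm 0)) := rfl
    rw [this]
    simp [hx]
  -- Application 2 : (Fm, Fp)
  have hTQ2 : ∀ x, L₀ x = 0 → Fm (Fp x) = 0 ∧ L₁ (Fp x) = 0 := by
    intro x hx
    have h1 : Fm (Fp x) = 0 := hx
    exact ⟨h1, by rw [← cFp x, hx, map_zero]⟩
  have hKey2 : ∀ x, Fm (Fp x) = 0 → L₁ (Fp x) = 0 → ∃ z, L₀ z = 0 ∧ Fp x = Fp z :=
    fun x h1 _ => ⟨x, h1, rfl⟩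
  have hsurj2 : ∀ y, Fm y = 0 → ∃ x, Fm (y - Fp x) = 0 ∧ L₁ (y - Fp x) = 0 := by
    intro y hy
    refine ⟨0, by simpa using hy, ?_⟩
    have : L₁ (y - Fp 0) = Fp (Fm (y - Fp 0)) := rfl
    rw [this]
    simp [hy]
  -- Application 3 : (dp, dm)
  have hTQ3 : ∀ y, L₁ y = 0 → dp (dm y) = 0 ∧ L₀ (dm y) = 0 :=
    fun y hy => ⟨ed2 y, by rw [← cdm y, hy, map_zero]⟩
  have hKey3 : ∀ y, dp (dm y) = 0 → L₀ (dm y) = 0 → ∃ z, L₁ z = 0 ∧ dm y = dm z := by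
    intro y _ hPy
    obtain ⟨a, u, ha, hau⟩ := dec₁ y
    refine ⟨a, ha, ?_⟩
    have h1 : dm y = dm a + L₀ (dm u) := by rw [hau, map_add, cdm u]
    have h2 : L₀ (dm a) = 0 := by rw [← cdm a, ha, map_zero]
    have h3 : L₀ (L₀ (dm u)) = 0 := by
      have h := hPy
      rw [h1, map_add, h2, zero_add] at h
      exact h
    have h4 : L₀ (dm u) = 0 := disj₀ _ h3 ⟨dm u, rfl⟩
    rw [h1, h4, add_zero]
  have hsurj3 : ∀ x, dp x = 0 → ∃ y, dp (x - dm y) = 0 ∧ L₀ (x - dm y) = 0 := by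
    intro x hx
    obtain ⟨a, u, ha, hau⟩ := dec₀ x
    have hpa : L₁ (dp a) = 0 := by rw [← cdp a, ha, map_zero]
    have hsum : dp a + dp (L₀ u) = 0 := by rw [← map_add, ← hau, hx]
    have hpb : dp (L₀ u) = 0 := by
      refine disj₁ _ ?_ ⟨dp u, (cdp u).symm⟩
      have h : dp (L₀ u) = -dp a := by
        rw [eq_neg_iff_add_eq_zero, add_comm]; exact hsum
      rw [h, map_neg, hpa, neg_zero]
    have hpa0 : dp a = 0 := by rwa [hpb, add_zero] at hsum
    obtain ⟨a', w, ha', hu⟩ := dec₀ u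
    have hb : L₀ u = L₀ (L₀ w) := by rw [hu, map_add, ha', zero_add]
    have hpb' : dp (L₀ w) = 0 := by
      refine disj₁ _ ?_ ⟨dp w, (cdp w).symm⟩
      rw [← cdp (L₀ w), ← hb]
      exact hpb
    have hbeq : L₀ (L₀ w) = dm (δp (L₀ w)) := expand₀ _ hpb'
    have hxa : x - dm (δp (L₀ w)) = a := by
      rw [← hbeq, ← hb, hau]; abel
    refine ⟨δp (L₀ w), ?_, ?_⟩
    · rw [hxa]; exact hpa0
    · rw [hxa]; exact ha
  -- Application 4 : (dm, dp)
  have hTQ4 : ∀ x, L₀ x = 0 → dm (dp x) = 0 ∧ L₁ (dp x) = 0 :=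
    fun x hx => ⟨ed1 x, by rw [← cdp x, hx, map_zero]⟩
  have hKey4 : ∀ x, dm (dp x) = 0 → L₁ (dp x) = 0 → ∃ z, L₀ z = 0 ∧ dp x = dp z := by
    intro x _ hPx
    obtain ⟨a, u, ha, hau⟩ := dec₀ x
    refine ⟨a, ha, ?_⟩
    have h1 : dp x = dp a + L₁ (dp u) := by rw [hau, map_add, cdp u]
    have h2 : L₁ (dp a) = 0 := by rw [← cdp a, ha, map_zero]
    have h3 : L₁ (L₁ (dp u)) = 0 := by
      have h := hPx
      rw [h1, map_add, h2, zero_add] at h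
      exact h
    have h4 : L₁ (dp u) = 0 := disj₁ _ h3 ⟨dp u, rfl⟩
    rw [h1, h4, add_zero]
  have hsurj4 : ∀ x, dm x = 0 → ∃ y, dm (x - dp y) = 0 ∧ L₁ (x - dp y) = 0 := by
    intro x hx
    obtain ⟨a, u, ha, hau⟩ := dec₁ x
    have hpa : L₀ (dm a) = 0 := by rw [← cdm a, ha, map_zero]
    have hsum : dm a + dm (L₁ u) = 0 := by rw [← map_add, ← hau, hx]
    have hpb : dm (L₁ u) = 0 := by
      refine disj₀ _ ?_ ⟨dm u, (cdm u).symm⟩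
      have h : dm (L₁ u) = -dm a := by
        rw [eq_neg_iff_add_eq_zero, add_comm]; exact hsum
      rw [h, map_neg, hpa, neg_zero]
    have hpa0 : dm a = 0 := by rwa [hpb, add_zero] at hsum
    obtain ⟨a', w, ha', hu⟩ := dec₁ u
    have hb : L₁ u = L₁ (L₁ w) := by rw [hu, map_add, ha', zero_add]
    have hpb' : dm (L₁ w) = 0 := by
      refine disj₀ _ ?_ ⟨dm w, (cdm w).symm⟩
      rw [← cdm (L₁ w), ← hb]
      exact hpb
    have hbeq : L₁ (L₁ w) = dp (δm (L₁ w)) := expand₁ _ hpb'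
    have hxa : x - dp (δm (L₁ w)) = a := by
      rw [← hbeq, ← hb, hau]; abel
    refine ⟨δm (L₁ w), ?_, ?_⟩
    · rw [hxa]; exact hpa0
    · rw [hxa]; exact ha
  obtain ⟨f1, e1⟩ := key_lemma Fp Fm L₀ L₁ hker₀ hker₁ hTQ1 hKey1 hsurj1
  obtain ⟨f2, e2⟩ := key_lemma Fm Fp L₁ L₀ hker₁ hker₀ hTQ2 hKey2 hsurj2
  obtain ⟨f3, e3⟩ := key_lemma dp dm L₀ L₁ hker₀ hker₁ hTQ3 hKey3 hsurj3
  obtain ⟨f4, e4⟩ := key_lemma dm dp L₁ L₀ hker₁ hker₀ hTQ4 hKey4 hsurj4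
  refine ⟨⟨f1, f2⟩, ?_⟩
  unfold fredholmIndex
  omega
end

section
/- In the super setting, assume V⁰ = ker(F⁻∘F⁺) ⊕ im(F⁻∘F⁺) and V¹ = ker(F⁺∘F⁻) ⊕ im(F⁺∘F⁻). Then every x ∈ im(F⁻∘F⁺) with d⁺x = 0 lies in d⁻(im(F⁺∘F⁻)), and every y ∈ im(F⁺∘F⁻) with d⁻y = 0 lies in d⁺(im(F⁻∘F⁺)). In other words, the cohomology of d restricted to the image of F² vanishes, so the index of (d⁺, d⁻) acting on im(F²) is 0. -/
open LinearMap Module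

theorem super_key {V₀ V₁ : Type*}
    [AddCommGroup V₀] [Module ℂ V₀] [AddCommGroup V₁] [Module ℂ V₁]
    (dp δp : V₀ →ₗ[ℂ] V₁) (dm δm : V₁ →ₗ[ℂ] V₀)
    (hd₁ : dm ∘ₗ dp = 0) (hd₂ : dp ∘ₗ dm = 0)
    (hδ₁ : δm ∘ₗ δp = 0) (hδ₂ : δp ∘ₗ δm = 0)
    (hcompl₀ : IsCompl (LinearMap.ker ((dm + δm) ∘ₗ (dp + δp)))
      (LinearMap.range ((dm + δm) ∘ₗ (dp + δp))))
    (hcompl₁ : IsCompl (LinearMap.ker ((dp + δp) ∘ₗ (dm + δm)))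
      (LinearMap.range ((dp + δp) ∘ₗ (dm + δm)))) :
    ∀ x : V₀, x ∈ LinearMap.range ((dm + δm) ∘ₗ (dp + δp)) → dp x = 0 →
      x ∈ Submodule.map dm (LinearMap.range ((dp + δp) ∘ₗ (dm + δm))) := by
  intro x hx hdx
  set A := (dm + δm) ∘ₗ (dp + δp) with hA
  set B := (dp + δp) ∘ₗ (dm + δm) with hB
  have h1 : ∀ z, dm (dp z) = 0 := fun z => by simpa using LinearMap.congr_fun hd₁ z
  have h2 : ∀ z, dp (dm z) = 0 := fun z => by simpa using LinearMap.congr_fun hd₂ z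
  have h3 : ∀ z, δm (δp z) = 0 := fun z => by simpa using LinearMap.congr_fun hδ₁ z
  have h4 : ∀ z, δp (δm z) = 0 := fun z => by simpa using LinearMap.congr_fun hδ₂ z
  -- write x = A (A v)
  obtain ⟨w, hw⟩ := hx
  obtain ⟨k, a, hk, ha, hka⟩ := Submodule.codisjoint_iff_exists_add_eq.mp hcompl₀.codisjoint w
  obtain ⟨v, hv⟩ := ha
  have hkz : A k = 0 := hk
  have hx' : x = A (A v) := by
    rw [← hw, ← hka, map_add, hkz, zero_add, hv]
  set u := A v with hu
  have hAexp : ∀ z : V₀, A z = dm (δp z) + δm (dp z) := by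
    intro z
    simp only [hA, LinearMap.comp_apply, LinearMap.add_apply, map_add, h1 z, h3 z]
    abel
  have hBexp_dp : ∀ z : V₀, B (dp z) = dp (δm (dp z)) := by
    intro z
    simp [hB, LinearMap.comp_apply, map_add, h1 z, h3, h4]
  have hBexp_δp : ∀ z : V₀, B (δp z) = δp (dm (δp z)) := by
    intro z
    simp [hB, LinearMap.comp_apply, map_add, h2, h3 z, h4]
  -- dp u ∈ range B
  have hdpu_range : dp u = B (dp v) := by
    rw [hBexp_dp, hu, hAexp, map_add, h2, zero_add]
  -- B (dp u) = dp x = 0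
  have hBdpu : B (dp u) = 0 := by
    rw [hBexp_dp]
    have : dp x = dp (δm (dp u)) := by
      rw [hx', hAexp, map_add, h2, zero_add]
    rw [← this, hdx]
  -- hence dp u = 0
  have hdpu : dp u = 0 := by
    have hmem : dp u ∈ LinearMap.ker B ⊓ LinearMap.range B :=
      ⟨hBdpu, hdpu_range ▸ ⟨dp v, rfl⟩⟩
    exact (Submodule.disjoint_def.mp hcompl₁.disjoint _ hmem.1 hmem.2)
  -- δp u ∈ range B
  have hδpu : δp u = B (δp v) := by
    rw [hBexp_δp, hu, hAexp, map_add, h4, add_zero]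
  refine ⟨δp u, ⟨δp v, hδpu.symm⟩, ?_⟩
  rw [hx', hAexp, hdpu, map_zero, add_zero]

/-- in the super setting, if `V⁰ = ker(F⁻∘F⁺) ⊕ im(F⁻∘F⁺)` and
`V¹ = ker(F⁺∘F⁻) ⊕ im(F⁺∘F⁻)`, then every `d⁺`-closed element of `im(F⁻∘F⁺)` lies in
`d⁻(im(F⁺∘F⁻))`, and every `d⁻`-closed element of `im(F⁺∘F⁻)` lies in `d⁺(im(F⁻∘F⁺))`:
the cohomology of `d` restricted to `im(F²)` vanishes. -/
theorem super_cohomology_on_range_F_sq_vanishes {V₀ V₁ : Type*}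
    [AddCommGroup V₀] [Module ℂ V₀] [AddCommGroup V₁] [Module ℂ V₁]
    (dp δp : V₀ →ₗ[ℂ] V₁) (dm δm : V₁ →ₗ[ℂ] V₀)
    (hd₁ : dm ∘ₗ dp = 0) (hd₂ : dp ∘ₗ dm = 0)
    (hδ₁ : δm ∘ₗ δp = 0) (hδ₂ : δp ∘ₗ δm = 0)
    (hcompl₀ : IsCompl (LinearMap.ker ((dm + δm) ∘ₗ (dp + δp)))
      (LinearMap.range ((dm + δm) ∘ₗ (dp + δp))))
    (hcompl₁ : IsCompl (LinearMap.ker ((dp + δp) ∘ₗ (dm + δm)))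
      (LinearMap.range ((dp + δp) ∘ₗ (dm + δm)))) :
    (∀ x : V₀, x ∈ LinearMap.range ((dm + δm) ∘ₗ (dp + δp)) → dp x = 0 →
      x ∈ Submodule.map dm (LinearMap.range ((dp + δp) ∘ₗ (dm + δm)))) ∧
    (∀ y : V₁, y ∈ LinearMap.range ((dp + δp) ∘ₗ (dm + δm)) → dm y = 0 →
      y ∈ Submodule.map dp (LinearMap.range ((dm + δm) ∘ₗ (dp + δp)))) := by
  exact ⟨super_key dp δp dm δm hd₁ hd₂ hδ₁ hδ₂ hcompl₀ hcompl₁,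
    super_key dm δm dp δp hd₂ hd₁ hδ₂ hδ₁ hcompl₁ hcompl₀⟩
end

section
/- In the super setting, assume: (i) ker(F⁻∘F⁺) and ker(F⁺∘F⁻) are finite-dimensional; (ii) V⁰ = ker(F⁻∘F⁺) ⊕ im(F⁻∘F⁺) and V¹ = ker(F⁺∘F⁻) ⊕ im(F⁺∘F⁻). Then (F⁺, F⁻) is a Fredholm pair and ind(F⁺, F⁻) = dim ker(F⁻∘F⁺) − dim ker(F⁺∘F⁻). -/
open LinearMap Module

section FPauxSec
variable {X Y : Type*} [AddCommGroup X] [Module ℂ X] [AddCommGroup Y] [Module ℂ Y]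
  (S : X →ₗ[ℂ] Y) (T : Y →ₗ[ℂ] X)

-- ker S ≤ ker (T ∘ S)
private lemma FPaux.kerle : LinearMap.ker S ≤ LinearMap.ker (T ∘ₗ S) := by
  intro x hx
  simp only [LinearMap.mem_ker] at *
  simp [LinearMap.comp_apply, hx]

-- map T (ker (S∘T)) ≤ ker S
private lemma FPaux.maple : Submodule.map T (LinearMap.ker (S ∘ₗ T)) ≤ LinearMap.ker S := by
  rintro x ⟨y, hy, rfl⟩
  simpa [LinearMap.mem_ker] using hy

-- key: ker S ⊓ range T = map T (ker (S∘T))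
private lemma FPaux.kerinf (hc₀ : IsCompl (LinearMap.ker (T ∘ₗ S)) (LinearMap.range (T ∘ₗ S)))
    (hc₁ : IsCompl (LinearMap.ker (S ∘ₗ T)) (LinearMap.range (S ∘ₗ T))) :
    LinearMap.ker S ⊓ LinearMap.range T = Submodule.map T (LinearMap.ker (S ∘ₗ T)) := by
  apply le_antisymm
  · rintro x ⟨hxS, y, rfl⟩
    -- decompose y = k + m, k ∈ ker (S∘T), m ∈ range (S∘T)
    obtain ⟨k, hk, m, hm, hkm⟩ : ∃ k ∈ LinearMap.ker (S ∘ₗ T), ∃ m ∈ LinearMap.range (S ∘ₗ T), k + m = y := by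
      have := hc₁.sup_eq_top
      have : y ∈ LinearMap.ker (S ∘ₗ T) ⊔ LinearMap.range (S ∘ₗ T) := this ▸ Submodule.mem_top
      exact Submodule.mem_sup.mp this
    obtain ⟨z, rfl⟩ := hm
    -- T y = T k + (T∘S)(T z)
    have h1 : T y - T k ∈ LinearMap.range (T ∘ₗ S) := ⟨T z, by
      rw [← hkm]; simp [LinearMap.comp_apply, map_add]⟩
    have h2 : T y ∈ LinearMap.ker (T ∘ₗ S) := FPaux.kerle S T hxS
    have h3 : T k ∈ LinearMap.ker (T ∘ₗ S) := by
      simp only [LinearMap.mem_ker, LinearMap.comp_apply]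
      have : S (T k) = 0 := hk
      rw [this, map_zero]
    have h4 : T y - T k ∈ LinearMap.ker (T ∘ₗ S) := sub_mem h2 h3
    have h5 : T y - T k = 0 := by
      have := hc₀.disjoint
      exact (Submodule.disjoint_def.mp this) _ h4 h1
    have : T y = T k := sub_eq_zero.mp h5
    exact ⟨k, hk, this.symm⟩
  · exact le_inf (FPaux.maple S T) ((Submodule.map_le_iff_le_comap.mpr (fun y _ => ⟨y, rfl⟩)))

private lemma FPaux.quot_add (hFD : FiniteDimensional ℂ (LinearMap.ker (T ∘ₗ S)))
    (hc₀ : IsCompl (LinearMap.ker (T ∘ₗ S)) (LinearMap.range (T ∘ₗ S)))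
    (hc₁ : IsCompl (LinearMap.ker (S ∘ₗ T)) (LinearMap.range (S ∘ₗ T))) :
    finrank ℂ (fredholmKerQuot S T) + finrank ℂ (Submodule.map T (LinearMap.ker (S ∘ₗ T)))
      = finrank ℂ (LinearMap.ker S) := by
  haveI : FiniteDimensional ℂ (LinearMap.ker S) :=
    Submodule.finiteDimensional_of_le (FPaux.kerle S T)
  have hcomap : Submodule.comap (LinearMap.ker S).subtype (LinearMap.range T)
      = Submodule.comap (LinearMap.ker S).subtype (Submodule.map T (LinearMap.ker (S ∘ₗ T))) := by
    rw [← FPaux.kerinf S T hc₀ hc₁]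
    ext x
    simp [x.2]
  have h1 : finrank ℂ (Submodule.comap (LinearMap.ker S).subtype
      (Submodule.map T (LinearMap.ker (S ∘ₗ T)))) = finrank ℂ (Submodule.map T (LinearMap.ker (S ∘ₗ T))) :=
    LinearEquiv.finrank_eq (Submodule.comapSubtypeEquivOfLe (FPaux.maple S T))
  have h2 : finrank ℂ (Submodule.comap (LinearMap.ker S).subtype (LinearMap.range T))
      = finrank ℂ (Submodule.map T (LinearMap.ker (S ∘ₗ T))) := by rw [hcomap, h1]
  have h3 := Submodule.finrank_quotient_add_finrank
    (Submodule.comap (LinearMap.ker S).subtype (LinearMap.range T))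
  show finrank ℂ ((LinearMap.ker S) ⧸ (Submodule.comap (LinearMap.ker S).subtype (LinearMap.range T)))
      + finrank ℂ (Submodule.map T (LinearMap.ker (S ∘ₗ T))) = finrank ℂ (LinearMap.ker S)
  omega

private lemma FPaux.rn (hFD : FiniteDimensional ℂ (LinearMap.ker (T ∘ₗ S))) :
    finrank ℂ (LinearMap.ker (T ∘ₗ S)) =
      finrank ℂ (LinearMap.ker S) + finrank ℂ (Submodule.map S (LinearMap.ker (T ∘ₗ S))) := by
  have h := LinearMap.finrank_range_add_finrank_ker (S ∘ₗ (LinearMap.ker (T ∘ₗ S)).subtype)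
  have h1 : finrank ℂ (LinearMap.range (S ∘ₗ (LinearMap.ker (T ∘ₗ S)).subtype))
      = finrank ℂ (Submodule.map S (LinearMap.ker (T ∘ₗ S))) := by
    rw [LinearMap.range_comp, Submodule.range_subtype]
  have h2 : finrank ℂ (LinearMap.ker (S ∘ₗ (LinearMap.ker (T ∘ₗ S)).subtype))
      = finrank ℂ (LinearMap.ker S) := by
    rw [LinearMap.ker_comp]
    exact LinearEquiv.finrank_eq (Submodule.comapSubtypeEquivOfLe (FPaux.kerle S T))
  omega

end FPauxSec

/-- in the super setting, if `ker(F⁻∘F⁺)` and `ker(F⁺∘F⁻)` are finite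
dimensional and `V⁰ = ker(F⁻∘F⁺) ⊕ im(F⁻∘F⁺)`, `V¹ = ker(F⁺∘F⁻) ⊕ im(F⁺∘F⁻)`, then
`(F⁺, F⁻)` is a Fredholm pair and `ind(F⁺,F⁻) = dim ker(F⁻∘F⁺) - dim ker(F⁺∘F⁻)`. -/
theorem fredholmIndex_super_eq_dim_ker_sub_dim_ker {V₀ V₁ : Type*}
    [AddCommGroup V₀] [Module ℂ V₀] [AddCommGroup V₁] [Module ℂ V₁]
    (dp δp : V₀ →ₗ[ℂ] V₁) (dm δm : V₁ →ₗ[ℂ] V₀)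
    (hd₁ : dm ∘ₗ dp = 0) (hd₂ : dp ∘ₗ dm = 0)
    (hδ₁ : δm ∘ₗ δp = 0) (hδ₂ : δp ∘ₗ δm = 0)
    (hker₀ : FiniteDimensional ℂ (LinearMap.ker ((dm + δm) ∘ₗ (dp + δp))))
    (hker₁ : FiniteDimensional ℂ (LinearMap.ker ((dp + δp) ∘ₗ (dm + δm))))
    (hcompl₀ : IsCompl (LinearMap.ker ((dm + δm) ∘ₗ (dp + δp)))
      (LinearMap.range ((dm + δm) ∘ₗ (dp + δp))))
    (hcompl₁ : IsCompl (LinearMap.ker ((dp + δp) ∘ₗ (dm + δm)))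
      (LinearMap.range ((dp + δp) ∘ₗ (dm + δm)))) :
    IsFredholmPair (dp + δp) (dm + δm) ∧
    fredholmIndex (dp + δp) (dm + δm) =
      (Module.finrank ℂ (LinearMap.ker ((dm + δm) ∘ₗ (dp + δp))) : ℤ) -
        (Module.finrank ℂ (LinearMap.ker ((dp + δp) ∘ₗ (dm + δm))) : ℤ) := by
  set S := dp + δp
  set T := dm + δm
  haveI : FiniteDimensional ℂ (LinearMap.ker S) :=
    Submodule.finiteDimensional_of_le (FPaux.kerle S T)
  haveI : FiniteDimensional ℂ (LinearMap.ker T) :=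
    Submodule.finiteDimensional_of_le (FPaux.kerle T S)
  refine ⟨⟨inferInstance, inferInstance⟩, ?_⟩
  have e1 := FPaux.quot_add S T hker₀ hcompl₀ hcompl₁
  have e2 := FPaux.quot_add T S hker₁ hcompl₁ hcompl₀
  have e3 := FPaux.rn S T hker₀
  have e4 := FPaux.rn T S hker₁
  unfold fredholmIndex
  omega
end
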